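/- Let V be a finite set, S ⊆ V a subset, C ⊆ V a subset, and φ : V \ C → V \ S an injective function. Then for any starting point v₀ ∈ S, the sequence defined by iterating φ (applied whenever the current element is not in C) eventually reaches an element of C; i.e., there exists a finite t such that the t-th iterate lies in C. -/

import Mathlib

open scoped Classical

/-- Universal iterative encoder convergence: with `V` finite, `S C ⊆ V`,
`φ` mapping `V \ C` into `V \ S` injectively, iterating the step function
(from any `v₀ ∈ S`) eventually reaches `C`. -/
theorem stmt_0 {V : Type*} [Fintype V] (S C : Set V) (φ : V → V)
    (hφS : ∀ v ∉ C, φ v ∉ S) (hφinj : Set.InjOn φ Cᶜ)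
    (v₀ : V) (hv₀ : v₀ ∈ S) :
    ∃ t : ℕ, (fun v => if v ∈ C then v else φ v)^[t] v₀ ∈ C := by
  classical
  by_contra h
  push_neg at h
  set f : V → V := (fun v => if v ∈ C then v else φ v) with hf
  have hstep : ∀ t, f^[t + 1] v₀ = φ (f^[t] v₀) := by
    intro t
    rw [Function.iterate_succ_apply']
    simp only [hf] at h ⊢; simp [h t]
  have hcancel : ∀ a b, f^[a + 1] v₀ = f^[b + 1] v₀ → f^[a] v₀ = f^[b] v₀ := by
    intro a b hab
    rw [hstep, hstep] at hab
    exact hφinj (h a) (h b) hab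
  have hshift : ∀ k a b, f^[a + k] v₀ = f^[b + k] v₀ → f^[a] v₀ = f^[b] v₀ := by
    intro k
    induction k with
    | zero => intro a b hab; simpa using hab
    | succ k ih =>
        intro a b hab
        exact ih a b (hcancel (a + k) (b + k)
          (by rw [show a + k + 1 = a + (k + 1) from rfl, show b + k + 1 = b + (k + 1) from rfl]
              exact hab))
  obtain ⟨m, n, hmn, heq⟩ : ∃ m n : ℕ, m ≠ n ∧ f^[m] v₀ = f^[n] v₀ := by
    obtain ⟨m, n, hmn, heq⟩ := Finite.exists_ne_map_eq_of_infinite (fun t : ℕ => f^[t] v₀)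
    exact ⟨m, n, hmn, heq⟩
  wlog hlt : m < n generalizing m n
  · exact this n m hmn.symm heq.symm (hmn.lt_or_gt.resolve_left hlt)
  obtain ⟨d, rfl⟩ := Nat.exists_eq_add_of_lt hlt
  have h0 : f^[0] v₀ = f^[d + 1] v₀ := by
    apply hshift m 0 (d + 1)
    rw [Nat.zero_add, show d + 1 + m = m + d + 1 from by omega]
    exact heq
  have : v₀ = φ (f^[d] v₀) := by simpa [hstep d] using h0
  exact hφS _ (h d) (this ▸ hv₀)
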